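/- There is a universal constant c_l > 0 such that for any two indifference-set sizes k₁ ≥ k₂ ≥ 1 with k₁ + k₂ = n, every measurable estimator M̂ = M̂(Y) satisfies sup over M* ∈ C_SST(2,(k₁,k₂)) of E‖M̂ − M*‖²_F ≥ c_l·(n − k₁). -/

import Mathlib

open MeasureTheory ENNReal

noncomputable section

namespace SSTPaper

/-- Squared Frobenius norm of an `n × n` real matrix (as a function). -/
def frobSq {n : ℕ} (A : Fin n → Fin n → ℝ) : ℝ := ∑ i, ∑ j, (A i j) ^ 2

/-- Trace inner product `⟨A, B⟩ = trace (Aᵀ B)`. -/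
def tinner {n : ℕ} (A B : Fin n → Fin n → ℝ) : ℝ := ∑ i, ∑ j, A i j * B i j

/-- The SST class: shifted-skew-symmetric matrices with entries in `[0,1]` that are
`π`-SST for some permutation `π` (where `π` ranks `i` above `j` iff `π j < π i`). -/
def sstClass (n : ℕ) : Set (Fin n → Fin n → ℝ) :=
  {M | (∀ i j, 0 ≤ M i j ∧ M i j ≤ 1) ∧ (∀ i j, M j i = 1 - M i j) ∧
    ∃ π : Equiv.Perm (Fin n), ∀ i j k : Fin n, π j < π i → M j k ≤ M i k}

/-- The set of SST matrices faithful to a given permutation `π`. -/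
def sstOf {n : ℕ} (π : Equiv.Perm (Fin n)) : Set (Fin n → Fin n → ℝ) :=
  {M | (∀ i j, 0 ≤ M i j ∧ M i j ≤ 1) ∧ (∀ i j, M j i = 1 - M i j) ∧
    ∀ i j k : Fin n, π j < π i → M j k ≤ M i k}

/-- Size of the largest indifference set of `M`: the maximal number of identical rows. -/
def kmaxM {n : ℕ} (M : Fin n → Fin n → ℝ) : ℕ :=
  Finset.univ.sup fun i => Set.ncard {j : Fin n | M j = M i}

/-- Number of indifference sets of `M`: the number of distinct rows. -/
def numSets {n : ℕ} (M : Fin n → Fin n → ℝ) : ℕ := Set.ncard (Set.range M)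

/-- SST matrices having an indifference set of size at least `k`. -/
def sstClassK (n k : ℕ) : Set (Fin n → Fin n → ℝ) :=
  {M | M ∈ sstClass n ∧ k ≤ kmaxM M}

/-- SST matrices that respect some indifference-set partition of sizes `k`. -/
def sstClassPart (n s : ℕ) (k : Fin s → ℕ) : Set (Fin n → Fin n → ℝ) :=
  {M | M ∈ sstClass n ∧ ∃ P : Fin s → Finset (Fin n),
    (∀ a b, a ≠ b → Disjoint (P a) (P b)) ∧ (∀ a, (P a).card = k a) ∧
    (∀ i : Fin n, ∃ a, i ∈ P a) ∧
    ∀ a b : Fin s, ∀ i ∈ P a, ∀ i' ∈ P a, ∀ j ∈ P b, ∀ j' ∈ P b, M i j = M i' j'}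

/-- Bernoulli measure on `Bool` with success probability `p`. -/
def bern (p : ℝ) : Measure Bool :=
  (ENNReal.ofReal p) • Measure.dirac true + (ENNReal.ofReal (1 - p)) • Measure.dirac false

/-- The law of the observation matrix `Y`: entries on and above the diagonal independent,
`P[Y i j = 1] = M i j` for `i < j`, `Y j i = 1 - Y i j` off the diagonal, and fair coin
on the diagonal. -/
def obsMeasure {n : ℕ} (M : Fin n → Fin n → ℝ) : Measure (Fin n → Fin n → ℝ) :=
  Measure.map (fun (ω : Fin n × Fin n → Bool) (i j : Fin n) =>
      if i < j then (if ω (i, j) then (1 : ℝ) else 0)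
      else if j < i then 1 - (if ω (j, i) then (1 : ℝ) else 0)
      else (if ω (i, j) then (1 : ℝ) else 0))
    (Measure.pi fun p : Fin n × Fin n => bern (if p.1 = p.2 then 1 / 2 else M p.1 p.2))

/-- The risk `E ‖M̂(Y) − M*‖²_F` of an estimator. -/
def risk {n : ℕ} (Mhat : (Fin n → Fin n → ℝ) → Fin n → Fin n → ℝ)
    (Mstar : Fin n → Fin n → ℝ) : ℝ≥0∞ :=
  ∫⁻ Y, ENNReal.ofReal (frobSq (Mhat Y - Mstar)) ∂(obsMeasure Mstar)

/-- The `(s, k)`-oracle risk. -/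
def oracleRisk (n s : ℕ) (k : Fin s → ℕ) : ℝ≥0∞ :=
  ⨅ (Mhat : (Fin n → Fin n → ℝ) → Fin n → Fin n → ℝ) (_ : Measurable Mhat),
    ⨆ (Mstar : Fin n → Fin n → ℝ) (_ : Mstar ∈ sstClassPart n s k), risk Mhat Mstar

/-- The global adaptivity index of an estimator. -/
def adaptIndex {n : ℕ} (Mhat : (Fin n → Fin n → ℝ) → Fin n → Fin n → ℝ) : ℝ≥0∞ :=
  ⨆ (s : ℕ) (k : Fin s → ℕ) (_ : ∀ a, 1 ≤ k a) (_ : ∑ a, k a = n) (_ : ∀ a, k a < n),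
    (⨆ (Mstar : Fin n → Fin n → ℝ) (_ : Mstar ∈ sstClassPart n s k), risk Mhat Mstar) /
      oracleRisk n s k

/-- Number of wins of item `i`. -/
def winCount {n : ℕ} (Y : Fin n → Fin n → ℝ) (i : Fin n) : ℝ := ∑ j, Y i j

instance {n : ℕ} : MeasurableSpace (Equiv.Perm (Fin n)) := ⊤

/-- Uniform measure on a (finite) set. -/
def unifOn {α : Type*} [Fintype α] [MeasurableSpace α] (s : Set α) : Measure α :=
  (s.ncard : ℝ≥0∞)⁻¹ • ∑ a ∈ (Set.toFinite s).toFinset, Measure.dirac a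

namespace LB

/-- ℕ-level involution swapping `x ↔ x + k2` for `x < k2` with `t x = true`. -/
def sigN (k2 : ℕ) (t : ℕ → Bool) (x : ℕ) : ℕ :=
  if x < k2 then (if t x then x + k2 else x)
  else if x < 2 * k2 then (if t (x - k2) then x - k2 else x) else x

lemma sigN_lt {n k2 : ℕ} (h2 : 2 * k2 ≤ n) (t : ℕ → Bool) {x : ℕ} (hx : x < n) :
    sigN k2 t x < n := by
  unfold sigN; split_ifs <;> omega

lemma sigN_invol (k2 : ℕ) (t : ℕ → Bool) (x : ℕ) : sigN k2 t (sigN k2 t x) = x := by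
  unfold sigN
  rcases lt_or_ge x k2 with h1 | h1
  · rcases ht : t x with _ | _
    · simp [h1, ht]
    · have h3 : ¬ (x + k2 < k2) := by omega
      have h4 : x + k2 < 2 * k2 := by omega
      simp [h1, ht, h3, h4]
  · rcases lt_or_ge x (2 * k2) with h2 | h2
    · have h1' : ¬ (x < k2) := by omega
      rcases ht : t (x - k2) with _ | _
      · simp [h1', h2, ht]
      · have h5 : x - k2 < k2 := by omega
        have h6 : x - k2 + k2 = x := by omega
        simp [h1', h2, ht, h5, h6]
    · have h1' : ¬ (x < k2) := by omega
      have h2' : ¬ (x < 2 * k2) := by omega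
      simp [h1', h2']

/-- The matching involution as a permutation of `Fin n`. -/
def sigP (n k2 : ℕ) (h2 : 2 * k2 ≤ n) (t : ℕ → Bool) : Equiv.Perm (Fin n) :=
  Function.Involutive.toPerm (fun x => ⟨sigN k2 t x, sigN_lt h2 t x.isLt⟩)
    (fun x => by ext; simp [sigN_invol])

lemma sigP_apply {n k2 : ℕ} (h2 : 2 * k2 ≤ n) (t : ℕ → Bool) (x : Fin n) :
    ((sigP n k2 h2 t x : Fin n) : ℕ) = sigN k2 t x := rfl

/-- cardinality of an initial segment of Fin n -/
lemma card_filter_lt {n k2 : ℕ} (hk : k2 ≤ n) :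
    (Finset.univ.filter fun y : Fin n => (y : ℕ) < k2).card = k2 := by
  classical
  refine Finset.card_bij (fun (y : Fin n) _ => (y : ℕ)) ?_ ?_ ?_ |>.trans (Finset.card_range k2)
  · intro a ha; simpa using (Finset.mem_filter.mp ha).2
  · intro a ha b hb h; exact Fin.ext h
  · intro b hb
    simp only [Finset.mem_range] at hb
    exact ⟨⟨b, lt_of_lt_of_le hb hk⟩, by simp [hb], rfl⟩

lemma card_filter_comp_equiv {n : ℕ} (e : Equiv.Perm (Fin n)) (P : Fin n → Prop)
    [DecidablePred P] :
    (Finset.univ.filter fun x => P (e x)).card = (Finset.univ.filter P).card := by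
  classical
  refine Finset.card_bij (fun x _ => e x) ?_ ?_ ?_
  · intro a ha; exact Finset.mem_filter.mpr ⟨Finset.mem_univ _, (Finset.mem_filter.mp ha).2⟩
  · intro a _ b _ h; exact e.injective h
  · intro b hb; exact ⟨e.symm b, by simp_all, by simp⟩

lemma card_filter_sigN {n k2 : ℕ} (h2 : 2 * k2 ≤ n) (t : ℕ → Bool) :
    (Finset.univ.filter fun x : Fin n => sigN k2 t x < k2).card = k2 := by
  classical
  have h := card_filter_comp_equiv (sigP n k2 h2 t) (fun y : Fin n => (y : ℕ) < k2)
  simp only [sigP_apply] at h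
  calc _ = _ := by convert h using 2; ext x; exact Iff.rfl
    _ = k2 := card_filter_lt (by omega)


/-- bit function on ℕ from bits on Fin k2 -/
def tf (k2 : ℕ) (τ : Fin k2 → Bool) (m : ℕ) : Bool :=
  if h : m < k2 then τ ⟨m, h⟩ else false

/-- indicator of membership in the second (small) indifference set -/
def chi (n k2 : ℕ) (τ : Fin k2 → Bool) (x : Fin n) : ℝ :=
  if sigN k2 (tf k2 τ) x < k2 then 1 else 0

def dl (n : ℕ) : ℝ := Real.sqrt (1 / (36 * n))

/-- the hypothesis matrices -/
def MM (n k2 : ℕ) (τ : Fin k2 → Bool) (i j : Fin n) : ℝ :=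
  1 / 2 + dl n * (chi n k2 τ j - chi n k2 τ i)

lemma dl_nonneg (n : ℕ) : 0 ≤ dl n := Real.sqrt_nonneg _

lemma dl_sq {n : ℕ} (hn : 0 < n) : dl n ^ 2 = 1 / (36 * n) := by
  rw [dl, Real.sq_sqrt]; positivity

lemma dl_le (n : ℕ) : dl n ≤ 1 / 6 := by
  have h1 : (1:ℝ) / (36 * n) ≤ 1 / 36 := by
    rcases Nat.eq_zero_or_pos n with h | h
    · simp [h]
    · have : (1:ℝ) ≤ n := by exact_mod_cast h
      rw [div_le_div_iff₀ (by positivity) (by norm_num)]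
      nlinarith
  calc dl n ≤ Real.sqrt (1/36) := Real.sqrt_le_sqrt h1
    _ = 1/6 := by
        rw [show (1/36:ℝ) = (1/6)^2 by norm_num, Real.sqrt_sq (by norm_num)]

lemma chi_mem (n k2 : ℕ) (τ : Fin k2 → Bool) (x : Fin n) :
    chi n k2 τ x = 0 ∨ chi n k2 τ x = 1 := by
  unfold chi; split_ifs <;> simp

lemma MM_mem_sstClassPart {n k1 k2 : ℕ} (hk2 : 1 ≤ k2) (hk12 : k2 ≤ k1) (hsum : k1 + k2 = n)
    (τ : Fin k2 → Bool) : MM n k2 τ ∈ sstClassPart n 2 ![k1, k2] := by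
  classical
  have h2 : 2 * k2 ≤ n := by omega
  have hd0 := dl_nonneg n
  have hd6 := dl_le n
  constructor
  · refine ⟨?_, ?_, ?_⟩
    · intro i j
      rcases chi_mem n k2 τ i with h | h <;> rcases chi_mem n k2 τ j with h' | h' <;>
        rw [MM, h, h'] <;> constructor <;> nlinarith
    · intro i j; rw [MM, MM]; ring
    · refine ⟨sigP n k2 h2 (tf k2 τ), fun i j k hlt => ?_⟩
      have hlt' : sigN k2 (tf k2 τ) j < sigN k2 (tf k2 τ) i := hlt
      have hchi : chi n k2 τ i ≤ chi n k2 τ j := by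
        unfold chi
        split_ifs with hi hj
        · norm_num
        · exfalso; omega
        · norm_num
        · norm_num
      simp only [MM]
      nlinarith
  · refine ⟨![Finset.univ.filter fun x : Fin n => ¬ sigN k2 (tf k2 τ) x < k2,
      Finset.univ.filter fun x : Fin n => sigN k2 (tf k2 τ) x < k2], ?_, ?_, ?_, ?_⟩
    · have hdisj' : Disjoint
          (Finset.univ.filter fun x : Fin n => k2 ≤ sigN k2 (tf k2 τ) x)
          (Finset.univ.filter fun x : Fin n => sigN k2 (tf k2 τ) x < k2) := by
        rw [Finset.disjoint_left]
        intro x hx hx'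
        simp only [Finset.mem_filter] at hx hx'
        omega
      have hdisj : Disjoint
          (Finset.univ.filter fun x : Fin n => ¬ sigN k2 (tf k2 τ) x < k2)
          (Finset.univ.filter fun x : Fin n => sigN k2 (tf k2 τ) x < k2) := by
        rw [Finset.disjoint_left]
        intro x hx hx'
        simp only [Finset.mem_filter] at hx hx'
        tauto
      intro a b hab
      fin_cases a <;> fin_cases b <;> simp_all <;>
        first | exact hdisj | exact hdisj.symm | exact hdisj' | exact hdisj'.symm
    · intro a
      have hcard := card_filter_sigN (n := n) h2 (tf k2 τ)
      have htot := Finset.card_filter_add_card_filter_not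
        (s := (Finset.univ : Finset (Fin n))) (p := fun x : Fin n => sigN k2 (tf k2 τ) x < k2)
      fin_cases a <;> simp_all
      omega
    · intro i
      by_cases h : sigN k2 (tf k2 τ) i < k2
      · exact ⟨1, by simp [h]⟩
      · exact ⟨0, by simp; omega⟩
    · intro a b i hi i' hi' j hj j' hj'
      have key : ∀ c : Fin 2, ∀ x : Fin n,
          x ∈ (![Finset.univ.filter fun x : Fin n => ¬ sigN k2 (tf k2 τ) x < k2,
            Finset.univ.filter fun x : Fin n => sigN k2 (tf k2 τ) x < k2] c) →
          chi n k2 τ x = if c = 1 then 1 else 0 := by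
        intro c x hx
        fin_cases c <;> simp_all [chi]
      rw [MM, MM, key a i hi, key a i' hi', key b j hj, key b j' hj']


/-- the deterministic map from coin flips to the observation matrix -/
def obsMap (n : ℕ) (ω : Fin n × Fin n → Bool) (i j : Fin n) : ℝ :=
  if i < j then (if ω (i, j) then (1 : ℝ) else 0)
  else if j < i then 1 - (if ω (j, i) then (1 : ℝ) else 0)
  else (if ω (i, j) then (1 : ℝ) else 0)

lemma measurable_obsMap (n : ℕ) : Measurable (obsMap n) := by
  apply measurable_pi_lambda
  intro i
  apply measurable_pi_lambda
  intro j
  unfold obsMap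
  split_ifs with h1 h2
  · exact Measurable.comp (Measurable.of_discrete (f := fun b : Bool => if b then (1:ℝ) else 0))
      (measurable_pi_apply _)
  · exact (Measurable.comp
      (Measurable.of_discrete (f := fun b : Bool => if b then (1:ℝ) else 0))
      (measurable_pi_apply _)).const_sub 1
  · exact Measurable.comp (Measurable.of_discrete (f := fun b : Bool => if b then (1:ℝ) else 0))
      (measurable_pi_apply _)

/-- entry success probabilities -/
def qq {n : ℕ} (M : Fin n → Fin n → ℝ) (p : Fin n × Fin n) : ℝ :=
  if p.1 = p.2 then 1 / 2 else M p.1 p.2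

/-- weight of an outcome -/
def ww {n : ℕ} (M : Fin n → Fin n → ℝ) (ω : Fin n × Fin n → Bool) : ℝ :=
  ∏ p, (if ω p then qq M p else 1 - qq M p)

lemma qq_bounds {n : ℕ} {M : Fin n → Fin n → ℝ} (hM : ∀ i j, 0 ≤ M i j ∧ M i j ≤ 1)
    (p : Fin n × Fin n) : 0 ≤ qq M p ∧ qq M p ≤ 1 := by
  unfold qq; split_ifs
  · norm_num
  · exact hM _ _

lemma ww_nonneg {n : ℕ} {M : Fin n → Fin n → ℝ} (hM : ∀ i j, 0 ≤ M i j ∧ M i j ≤ 1)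
    (ω : Fin n × Fin n → Bool) : 0 ≤ ww M ω := by
  apply Finset.prod_nonneg
  intro p _
  rcases qq_bounds hM p with ⟨h0, h1⟩
  split_ifs <;> linarith

instance bern_finite (p : ℝ) : IsFiniteMeasure (bern p) := by
  constructor
  rw [bern]
  simp [lt_top_iff_ne_top]

lemma bern_singleton (p : ℝ) (b : Bool) :
    bern p {b} = ENNReal.ofReal (if b then p else 1 - p) := by
  cases b <;>
    simp [bern, Measure.dirac_apply', MeasurableSet.singleton, Set.indicator,
      Measure.add_apply, Measure.smul_apply, smul_eq_mul]

lemma frobSq_nonneg {n : ℕ} (A : Fin n → Fin n → ℝ) : 0 ≤ frobSq A := by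
  apply Finset.sum_nonneg; intro i _; apply Finset.sum_nonneg; intro j _; positivity

lemma measurable_frob {n : ℕ} {Mhat : (Fin n → Fin n → ℝ) → Fin n → Fin n → ℝ}
    (hMhat : Measurable Mhat) (M : Fin n → Fin n → ℝ) :
    Measurable fun Y => ENNReal.ofReal (frobSq (Mhat Y - M)) := by
  apply ENNReal.measurable_ofReal.comp
  unfold frobSq
  apply Finset.measurable_sum
  intro i _
  apply Finset.measurable_sum
  intro j _
  have h1 : Measurable fun Y => Mhat Y i j :=
    (measurable_pi_apply j).comp ((measurable_pi_apply i).comp hMhat)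
  exact ((h1.sub measurable_const).pow_const 2)

lemma pi_singleton {n : ℕ} {M : Fin n → Fin n → ℝ} (hM : ∀ i j, 0 ≤ M i j ∧ M i j ≤ 1)
    (ω : Fin n × Fin n → Bool) :
    (Measure.pi fun p : Fin n × Fin n => bern (qq M p)) {ω} =
      ENNReal.ofReal (ww M ω) := by
  have hset : ({ω} : Set (Fin n × Fin n → Bool)) = Set.pi Set.univ (fun p => {ω p}) := by
    ext g
    simp [funext_iff, Set.mem_pi]
  rw [hset, Measure.pi_pi, ww]
  calc (∏ p : Fin n × Fin n, (bern (qq M p)) {ω p})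
      = ∏ p : Fin n × Fin n, ENNReal.ofReal (if ω p then qq M p else 1 - qq M p) :=
        Finset.prod_congr rfl (fun p _ => by rw [bern_singleton])
    _ = ENNReal.ofReal (∏ p, if ω p then qq M p else 1 - qq M p) := by
        rw [← ENNReal.ofReal_prod_of_nonneg]
        intro p _
        rcases qq_bounds hM p with ⟨h0, h1⟩
        split_ifs <;> linarith

lemma risk_eq {n : ℕ} {M : Fin n → Fin n → ℝ} (hM : ∀ i j, 0 ≤ M i j ∧ M i j ≤ 1)
    {Mhat : (Fin n → Fin n → ℝ) → Fin n → Fin n → ℝ} (hMhat : Measurable Mhat) :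
    risk Mhat M = ENNReal.ofReal (∑ ω, ww M ω * frobSq (Mhat (obsMap n ω) - M)) := by
  have hobs : obsMeasure M =
      Measure.map (obsMap n) (Measure.pi fun p : Fin n × Fin n => bern (qq M p)) := rfl
  rw [risk, hobs, lintegral_map (measurable_frob hMhat M) (measurable_obsMap n),
    lintegral_fintype]
  rw [ENNReal.ofReal_sum_of_nonneg]
  · apply Finset.sum_congr rfl
    intro ω _
    rw [pi_singleton hM, ← ENNReal.ofReal_mul (frobSq_nonneg _), mul_comm]
  · intro ω _
    exact mul_nonneg (ww_nonneg hM ω) (frobSq_nonneg _)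


lemma sqrt_quarter : Real.sqrt (1/4) = 1/2 := by
  rw [show (1/4:ℝ) = (1/2)^2 by norm_num, Real.sqrt_sq (by norm_num : (0:ℝ) ≤ 1/2)]

lemma sqrt_mul_sqrt_ge {u v : ℝ} (hu : 1/4 ≤ u) (hv : 1/4 ≤ v) :
    (u + v - (u - v)^2)/2 ≤ Real.sqrt u * Real.sqrt v := by
  have hu0 : (0:ℝ) ≤ u := by linarith
  have hv0 : (0:ℝ) ≤ v := by linarith
  set su := Real.sqrt u with hsu_def
  set sv := Real.sqrt v with hsv_def
  have hsu : su^2 = u := Real.sq_sqrt hu0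
  have hsv : sv^2 = v := Real.sq_sqrt hv0
  have h12u : 1/2 ≤ su := by rw [← sqrt_quarter]; exact Real.sqrt_le_sqrt hu
  have h12v : 1/2 ≤ sv := by rw [← sqrt_quarter]; exact Real.sqrt_le_sqrt hv
  have h : 0 ≤ (su - sv)^2 * ((su + sv)^2 - 1) :=
    mul_nonneg (sq_nonneg _) (by nlinarith)
  rw [← hsu, ← hsv]
  nlinarith [h]

/-- affinity of two Bernoulli's with parameters in `[1/4, 3/4]` -/
lemma aff_ineq {a b : ℝ} (ha : 1/4 ≤ a) (ha' : a ≤ 3/4) (hb : 1/4 ≤ b) (hb' : b ≤ 3/4) :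
    1 - (a - b)^2 ≤ Real.sqrt (a*b) + Real.sqrt ((1-a)*(1-b)) := by
  have h1 : Real.sqrt (a*b) = Real.sqrt a * Real.sqrt b := Real.sqrt_mul (by linarith) b
  have h2 : Real.sqrt ((1-a)*(1-b)) = Real.sqrt (1-a) * Real.sqrt (1-b) :=
    Real.sqrt_mul (by linarith) _
  have k1 := sqrt_mul_sqrt_ge ha hb
  have k2 := sqrt_mul_sqrt_ge (u := 1-a) (v := 1-b) (by linarith) (by linarith)
  have h3 : ((1-a) - (1-b))^2 = (a-b)^2 := by ring
  rw [h3] at k2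
  rw [h1, h2]
  linarith

lemma sqrt_prod {ι : Type*} (s : Finset ι) (f : ι → ℝ) (hf : ∀ i ∈ s, 0 ≤ f i) :
    Real.sqrt (∏ i ∈ s, f i) = ∏ i ∈ s, Real.sqrt (f i) := by
  classical
  induction s using Finset.induction_on with
  | empty => simp
  | @insert a s' ha ih =>
    rw [Finset.prod_insert ha, Finset.prod_insert ha,
      Real.sqrt_mul (hf a (Finset.mem_insert_self a s')),
      ih (fun i hi => hf i (Finset.mem_insert_of_mem hi))]


lemma ww_nonneg' {n : ℕ} {M : Fin n → Fin n → ℝ} (hq : ∀ p, 0 ≤ qq M p ∧ qq M p ≤ 1)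
    (ω : Fin n × Fin n → Bool) : 0 ≤ ww M ω := by
  apply Finset.prod_nonneg
  intro p _
  rcases hq p with ⟨h0, h1⟩
  split_ifs <;> linarith

lemma ww_sum {n : ℕ} (M : Fin n → Fin n → ℝ) :
    ∑ ω : Fin n × Fin n → Bool, ww M ω = 1 := by
  classical
  simp only [ww]
  rw [← Fintype.prod_sum (fun (p : Fin n × Fin n) (b : Bool) => if b then qq M p else 1 - qq M p)]
  exact Finset.prod_eq_one (fun p _ => by rw [Fintype.sum_bool]; simp)

/-- key testing bound: the minimum-sum (affinity) of two product Bernoulli weightings -/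
lemma min_sum_ge {n : ℕ} {M M' : Fin n → Fin n → ℝ} (hn : 0 < n)
    (hq : ∀ p, 1/3 ≤ qq M p ∧ qq M p ≤ 2/3) (hq' : ∀ p, 1/3 ≤ qq M' p ∧ qq M' p ≤ 2/3)
    (hdiff : ∀ p : Fin n × Fin n, (qq M p - qq M' p)^2 ≤ 1/(9*n))
    (hbad : ((Finset.univ : Finset (Fin n × Fin n)).filter
      fun p => qq M p ≠ qq M' p).card ≤ 4*n) :
    (25/162 : ℝ) ≤ ∑ ω : Fin n × Fin n → Bool, min (ww M ω) (ww M' ω) := by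
  classical
  have hnR : (0:ℝ) < n := by exact_mod_cast hn
  have hq01 : ∀ p, 0 ≤ qq M p ∧ qq M p ≤ 1 := fun p => ⟨by linarith [(hq p).1], by linarith [(hq p).2]⟩
  have hq01' : ∀ p, 0 ≤ qq M' p ∧ qq M' p ≤ 1 := fun p => ⟨by linarith [(hq' p).1], by linarith [(hq' p).2]⟩
  set F : Fin n × Fin n → Bool → ℝ := fun p b => if b then qq M p else 1 - qq M p with hF
  set G : Fin n × Fin n → Bool → ℝ := fun p b => if b then qq M' p else 1 - qq M' p with hG
  have hFnn : ∀ p b, 0 ≤ F p b := by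
    intro p b; rcases hq01 p with ⟨h0, h1⟩; cases b <;> simp [hF] <;> linarith
  have hGnn : ∀ p b, 0 ≤ G p b := by
    intro p b; rcases hq01' p with ⟨h0, h1⟩; cases b <;> simp [hG] <;> linarith
  -- the affinity
  set ρ : ℝ := ∑ ω : Fin n × Fin n → Bool, Real.sqrt (ww M ω * ww M' ω) with hρ
  -- Step 1: product form
  have hprod : ρ = ∏ p : Fin n × Fin n, (Real.sqrt (qq M p * qq M' p) +
      Real.sqrt ((1 - qq M p) * (1 - qq M' p))) := by
    have h1 : ∀ ω : Fin n × Fin n → Bool,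
        Real.sqrt (ww M ω * ww M' ω) = ∏ p, Real.sqrt (F p (ω p) * G p (ω p)) := by
      intro ω
      rw [ww, ww, ← Finset.prod_mul_distrib, sqrt_prod]
      intro p _
      exact mul_nonneg (hFnn p (ω p)) (hGnn p (ω p))
    have h2 := Fintype.prod_sum (fun (p : Fin n × Fin n) (b : Bool) =>
      Real.sqrt (F p b * G p b))
    rw [hρ]
    calc (∑ ω : Fin n × Fin n → Bool, Real.sqrt (ww M ω * ww M' ω))
        = ∑ ω : Fin n × Fin n → Bool, ∏ p, Real.sqrt (F p (ω p) * G p (ω p)) :=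
          Finset.sum_congr rfl (fun ω _ => h1 ω)
      _ = ∏ p : Fin n × Fin n, ∑ b : Bool, Real.sqrt (F p b * G p b) := h2.symm
      _ = _ := by
          apply Finset.prod_congr rfl
          intro p _
          rw [Fintype.sum_bool]
          simp [hF, hG, add_comm]
  -- Step 2: lower bound on the affinity
  have hstep2 : (5/9 : ℝ) ≤ ρ := by
    have hfac : ∀ p : Fin n × Fin n,
        (if qq M p = qq M' p then (1:ℝ) else 1 - 1/(9*n)) ≤
          Real.sqrt (qq M p * qq M' p) + Real.sqrt ((1 - qq M p) * (1 - qq M' p)) := by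
      intro p
      rcases hq p with ⟨h1, h2⟩
      rcases hq' p with ⟨h3, h4⟩
      split_ifs with he
      · rw [he, Real.sqrt_mul_self (by linarith), Real.sqrt_mul_self (by linarith)]
        linarith
      · have := aff_ineq (a := qq M p) (b := qq M' p) (by linarith) (by linarith)
          (by linarith) (by linarith)
        have hd := hdiff p
        linarith
    have hn1 : (1:ℝ) ≤ n := by exact_mod_cast hn
    have h19 : (0:ℝ) ≤ 1/(9*n) := by positivity
    have h19' : (1:ℝ)/(9*n) ≤ 1/9 := by
      rw [div_le_div_iff₀ (by positivity) (by norm_num)]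
      nlinarith
    have hb0 : (0:ℝ) ≤ 1 - 1/(9*n) := by linarith
    have hprodle : ∏ p : Fin n × Fin n, (if qq M p = qq M' p then (1:ℝ) else 1 - 1/(9*n)) ≤ ρ := by
      rw [hprod]
      apply Finset.prod_le_prod
      · intro p _; split_ifs <;> [norm_num; exact hb0]
      · intro p _; exact hfac p
    have hprodeq : ∏ p : Fin n × Fin n, (if qq M p = qq M' p then (1:ℝ) else 1 - 1/(9*n)) =
        (1 - 1/(9*n)) ^ ((Finset.univ : Finset (Fin n × Fin n)).filter
          fun p => qq M p ≠ qq M' p).card := by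
      rw [← Finset.prod_filter_mul_prod_filter_not Finset.univ
        (fun p => qq M p = qq M' p)]
      have e1 : (∏ x ∈ Finset.filter (fun x => qq M x = qq M' x) Finset.univ,
          if qq M x = qq M' x then (1:ℝ) else 1 - 1 / (9 * n)) = 1 :=
        Finset.prod_eq_one (fun x hx => if_pos (Finset.mem_filter.mp hx).2)
      have e2 : (∏ x ∈ Finset.filter (fun x => ¬ qq M x = qq M' x) Finset.univ,
          if qq M x = qq M' x then (1:ℝ) else 1 - 1 / (9 * n)) =
          (1 - 1/(9*n)) ^ (Finset.filter (fun p => qq M p ≠ qq M' p)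
            (Finset.univ : Finset (Fin n × Fin n))).card := by
        rw [Finset.prod_congr rfl
          (fun x hx => if_neg (Finset.mem_filter.mp hx).2), Finset.prod_const]
      rw [e1, e2, one_mul]
    have hb1 : 1 - 1/(9*(n:ℝ)) ≤ 1 := by linarith
    have hpow : (1 - 1/(9*(n:ℝ)))^(4*n) ≤ (1 - 1/(9*(n:ℝ))) ^ ((Finset.univ :
        Finset (Fin n × Fin n)).filter fun p => qq M p ≠ qq M' p).card :=
      pow_le_pow_of_le_one hb0 hb1 hbad
    have hBern : 1 + (4*n : ℕ) * (-(1/(9*(n:ℝ)))) ≤ (1 + (-(1/(9*(n:ℝ)))))^(4*n) :=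
      one_add_mul_le_pow (by linarith) (4*n)
    have hcalc : ((4*n : ℕ) : ℝ) * (1/(9*(n:ℝ))) = 4/9 := by
      push_cast
      field_simp
    have h59 : (5/9 : ℝ) ≤ (1 - 1/(9*(n:ℝ)))^(4*n) := by
      have : (1 + (-(1/(9*(n:ℝ))))) = 1 - 1/(9*(n:ℝ)) := by ring
      rw [this] at hBern
      nlinarith [hBern, hcalc]
    calc (5/9 : ℝ) ≤ (1 - 1/(9*(n:ℝ)))^(4*n) := h59
      _ ≤ _ := hpow
      _ = _ := hprodeq.symm
      _ ≤ ρ := hprodle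
  -- Step 3: Cauchy-Schwarz
  have hmin_nonneg : ∀ ω, 0 ≤ min (ww M ω) (ww M' ω) :=
    fun ω => le_min (ww_nonneg' hq01 ω) (ww_nonneg' hq01' ω)
  have hCS : ρ^2 ≤ (∑ ω : Fin n × Fin n → Bool, min (ww M ω) (ww M' ω)) *
      (∑ ω : Fin n × Fin n → Bool, max (ww M ω) (ww M' ω)) := by
    have h := Finset.sum_mul_sq_le_sq_mul_sq Finset.univ
      (fun ω : Fin n × Fin n → Bool => Real.sqrt (min (ww M ω) (ww M' ω)))
      (fun ω : Fin n × Fin n → Bool => Real.sqrt (max (ww M ω) (ww M' ω)))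
    have he : ∀ ω : Fin n × Fin n → Bool,
        Real.sqrt (min (ww M ω) (ww M' ω)) * Real.sqrt (max (ww M ω) (ww M' ω)) =
          Real.sqrt (ww M ω * ww M' ω) := by
      intro ω
      rw [← Real.sqrt_mul (hmin_nonneg ω), min_mul_max]
    have he2 : ∀ ω : Fin n × Fin n → Bool,
        Real.sqrt (min (ww M ω) (ww M' ω)) ^ 2 = min (ww M ω) (ww M' ω) :=
      fun ω => Real.sq_sqrt (hmin_nonneg ω)
    have he3 : ∀ ω : Fin n × Fin n → Bool,
        Real.sqrt (max (ww M ω) (ww M' ω)) ^ 2 = max (ww M ω) (ww M' ω) :=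
      fun ω => Real.sq_sqrt (le_max_of_le_left (ww_nonneg' hq01 ω))
    calc ρ^2 = (∑ ω : Fin n × Fin n → Bool,
        Real.sqrt (min (ww M ω) (ww M' ω)) * Real.sqrt (max (ww M ω) (ww M' ω)))^2 := by
          rw [hρ]; congr 1; exact Finset.sum_congr rfl (fun ω _ => (he ω).symm)
      _ ≤ _ := by
          have := h
          simp only [he2, he3] at this
          exact this
  have hmax : (∑ ω : Fin n × Fin n → Bool, max (ww M ω) (ww M' ω)) ≤ 2 := by
    have : ∀ ω : Fin n × Fin n → Bool, max (ww M ω) (ww M' ω) ≤ ww M ω + ww M' ω := by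
      intro ω
      exact max_le (by linarith [ww_nonneg' hq01' ω]) (by linarith [ww_nonneg' hq01 ω])
    calc (∑ ω : Fin n × Fin n → Bool, max (ww M ω) (ww M' ω))
        ≤ ∑ ω : Fin n × Fin n → Bool, (ww M ω + ww M' ω) := Finset.sum_le_sum (fun ω _ => this ω)
      _ = 2 := by rw [Finset.sum_add_distrib, ww_sum, ww_sum]; norm_num
  have hminsum_nonneg : 0 ≤ ∑ ω : Fin n × Fin n → Bool, min (ww M ω) (ww M' ω) :=
    Finset.sum_nonneg (fun ω _ => hmin_nonneg ω)
  nlinarith [hCS, hstep2, hmax, hminsum_nonneg]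


-- ### hypothesis-specific facts

lemma qq_MM {n k2 : ℕ} (τ : Fin k2 → Bool) (p : Fin n × Fin n) :
    qq (MM n k2 τ) p = MM n k2 τ p.1 p.2 := by
  unfold qq
  split_ifs with h
  · rw [h, MM, sub_self, mul_zero, add_zero]
  · rfl

lemma qq_MM_bounds {n k2 : ℕ} (τ : Fin k2 → Bool) (p : Fin n × Fin n) :
    1/3 ≤ qq (MM n k2 τ) p ∧ qq (MM n k2 τ) p ≤ 2/3 := by
  rw [qq_MM, MM]
  have hd0 := dl_nonneg n
  have hd6 := dl_le n
  rcases chi_mem n k2 τ p.1 with h | h <;> rcases chi_mem n k2 τ p.2 with h' | h' <;>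
    rw [h, h'] <;> constructor <;> nlinarith

lemma chi_sum {n k2 : ℕ} (h2 : 2 * k2 ≤ n) (τ : Fin k2 → Bool) :
    ∑ x : Fin n, chi n k2 τ x = (k2 : ℝ) := by
  classical
  unfold chi
  rw [Finset.sum_boole, card_filter_sigN h2 (tf k2 τ)]

lemma tf_coe {k2 : ℕ} (τ : Fin k2 → Bool) (a : Fin k2) : tf k2 τ (a : ℕ) = τ a := by
  unfold tf
  rw [dif_pos a.isLt]

lemma chi_castLE {n k2 : ℕ} (h : k2 ≤ n) (τ : Fin k2 → Bool) (a : Fin k2) :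
    chi n k2 τ (Fin.castLE h a) = if τ a then 0 else 1 := by
  unfold chi
  have hval : ((Fin.castLE h a : Fin n) : ℕ) = (a : ℕ) := rfl
  rw [hval]
  have hlt : (a : ℕ) < k2 := a.isLt
  rw [sigN, if_pos hlt, tf_coe]
  cases hτ : τ a
  · simp [hlt]
  · have : ¬ ((a : ℕ) + k2 < k2) := by omega
    simp [this]

-- flipping one bit
def flp {k2 : ℕ} (a : Fin k2) (τ : Fin k2 → Bool) : Fin k2 → Bool :=
  Function.update τ a (!τ a)

lemma flp_apply_same {k2 : ℕ} (a : Fin k2) (τ : Fin k2 → Bool) : flp a τ a = !τ a := by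
  rw [flp, Function.update_self]

lemma flp_flp {k2 : ℕ} (a : Fin k2) (τ : Fin k2 → Bool) : flp a (flp a τ) = τ := by
  funext b
  rcases eq_or_ne b a with h | h
  · subst h
    rw [flp, flp_apply_same, Function.update_self, Bool.not_not]
  · rw [flp, Function.update_of_ne h, flp, Function.update_of_ne h]

lemma flp_bijective {k2 : ℕ} (a : Fin k2) : Function.Bijective (flp a) :=
  Function.Involutive.bijective (flp_flp a)

lemma tf_flp {k2 : ℕ} (a : Fin k2) (τ : Fin k2 → Bool) {m : ℕ} (hm : m ≠ (a : ℕ)) :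
    tf k2 (flp a τ) m = tf k2 τ m := by
  unfold tf
  split_ifs with h
  · rw [flp, Function.update_of_ne (fun hc => hm (congrArg Fin.val hc))]
  · rfl

lemma chi_flp {n k2 : ℕ} (a : Fin k2) (τ : Fin k2 → Bool) (x : Fin n)
    (hx1 : (x : ℕ) ≠ (a : ℕ)) (hx2 : (x : ℕ) ≠ (a : ℕ) + k2) :
    chi n k2 (flp a τ) x = chi n k2 τ x := by
  unfold chi
  have : sigN k2 (tf k2 (flp a τ)) x = sigN k2 (tf k2 τ) x := by
    by_cases hlt : (x : ℕ) < k2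
    · simp only [sigN, if_pos hlt, tf_flp a τ hx1]
    · by_cases hlt2 : (x : ℕ) < 2 * k2
      · have hne : (x : ℕ) - k2 ≠ (a : ℕ) := by omega
        simp only [sigN, if_neg hlt, if_pos hlt2, tf_flp a τ hne]
      · simp only [sigN, if_neg hlt, if_neg hlt2]
  rw [this]

lemma qq_flp_diff_sq {n k2 : ℕ} (hn : 0 < n) (a : Fin k2) (τ : Fin k2 → Bool)
    (p : Fin n × Fin n) :
    (qq (MM n k2 τ) p - qq (MM n k2 (flp a τ)) p)^2 ≤ 1/(9*(n:ℝ)) := by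
  have hnR : (0:ℝ) < n := by exact_mod_cast hn
  have h49 : (4:ℝ) * (1/(36*(n:ℝ))) = 1/(9*(n:ℝ)) := by
    field_simp
    ring
  have hd2 := dl_sq hn
  rw [qq_MM, qq_MM, MM, MM]
  rcases chi_mem n k2 τ p.1 with h1 | h1 <;> rcases chi_mem n k2 τ p.2 with h2 | h2 <;>
    rcases chi_mem n k2 (flp a τ) p.1 with h3 | h3 <;>
    rcases chi_mem n k2 (flp a τ) p.2 with h4 | h4 <;>
    rw [h1, h2, h3, h4] <;> nlinarith [dl_nonneg n]

lemma bad_card {n k2 : ℕ} (h2 : 2 * k2 ≤ n) (a : Fin k2) (τ : Fin k2 → Bool) :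
    ((Finset.univ : Finset (Fin n × Fin n)).filter
      fun p => qq (MM n k2 τ) p ≠ qq (MM n k2 (flp a τ)) p).card ≤ 4*n := by
  classical
  have ha1 : (a : ℕ) < n := by omega
  have ha2 : (a : ℕ) + k2 < n := by omega
  set u : Fin n := ⟨a, ha1⟩
  set v : Fin n := ⟨(a : ℕ) + k2, ha2⟩
  set A : Finset (Fin n) := {u, v} with hA
  have hnotmem : ∀ x : Fin n, x ∉ A → ((x:ℕ) ≠ (a:ℕ) ∧ (x:ℕ) ≠ (a:ℕ) + k2) := by
    intro x hx
    simp only [hA, Finset.mem_insert, Finset.mem_singleton] at hx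
    push_neg at hx
    exact ⟨fun hc => hx.1 (Fin.ext hc), fun hc => hx.2 (Fin.ext hc)⟩
  have hkey : ∀ p : Fin n × Fin n, p.1 ∉ A → p.2 ∉ A →
      qq (MM n k2 τ) p = qq (MM n k2 (flp a τ)) p := by
    intro p hp1 hp2
    rcases hnotmem p.1 hp1 with ⟨h1a, h1b⟩
    rcases hnotmem p.2 hp2 with ⟨h2a, h2b⟩
    rw [qq_MM, qq_MM, MM, MM, chi_flp a τ p.1 h1a h1b, chi_flp a τ p.2 h2a h2b]
  have hsub : ((Finset.univ : Finset (Fin n × Fin n)).filter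
      fun p => qq (MM n k2 τ) p ≠ qq (MM n k2 (flp a τ)) p) ⊆
      (A ×ˢ Finset.univ) ∪ (Finset.univ ×ˢ A) := by
    intro p hp
    have hne := (Finset.mem_filter.mp hp).2
    by_cases hu1 : p.1 ∈ A
    · exact Finset.mem_union_left _ (Finset.mem_product.mpr ⟨hu1, Finset.mem_univ _⟩)
    · by_cases hu2 : p.2 ∈ A
      · exact Finset.mem_union_right _ (Finset.mem_product.mpr ⟨Finset.mem_univ _, hu2⟩)
      · exact absurd (hkey p hu1 hu2) hne
  have hcard := Finset.card_le_card hsub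
  have hA2 : A.card ≤ 2 := by
    calc A.card ≤ ({v} : Finset (Fin n)).card + 1 := Finset.card_insert_le u {v}
      _ = 2 := by rw [Finset.card_singleton]
  have hun := Finset.card_union_le (A ×ˢ (Finset.univ : Finset (Fin n)))
    ((Finset.univ : Finset (Fin n)) ×ˢ A)
  rw [Finset.card_product, Finset.card_product, Finset.card_univ, Fintype.card_fin] at hun
  calc ((Finset.univ : Finset (Fin n × Fin n)).filter
      fun p => qq (MM n k2 τ) p ≠ qq (MM n k2 (flp a τ)) p).card
      ≤ _ := hcard
    _ ≤ A.card * n + n * A.card := hun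
    _ ≤ 4 * n := by nlinarith


-- ### the tests
/-- midpoint used by the row-sum test -/
def mid (n k2 : ℕ) : ℝ := n/2 + dl n * k2 - n * dl n / 2

/-- the test for bit `a`: is the row-sum of row `a` large? -/
def tst {n k2 : ℕ} (h : k2 ≤ n) (x : Fin n → Fin n → ℝ) (a : Fin k2) : Bool :=
  decide (mid n k2 ≤ ∑ j, x (Fin.castLE h a) j)

/-- indicator that the test `e` got the bit `b` wrong -/
def errI (e b : Bool) : ℝ := if e = b then 0 else 1

lemma errI_nonneg (e b : Bool) : 0 ≤ errI e b := by unfold errI; split_ifs <;> norm_num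
lemma errI_add (e b : Bool) : errI e b + errI e (!b) = 1 := by
  cases e <;> cases b <;> simp [errI]

lemma rowsum_MM {n k2 : ℕ} (h2 : 2 * k2 ≤ n) (h : k2 ≤ n) (τ : Fin k2 → Bool) (a : Fin k2) :
    ∑ j, MM n k2 τ (Fin.castLE h a) j =
      (if τ a then mid n k2 + n * dl n / 2 else mid n k2 - n * dl n / 2) := by
  have hsum : ∑ j, MM n k2 τ (Fin.castLE h a) j =
      (n : ℝ)/2 + dl n * ((k2 : ℝ) - n * chi n k2 τ (Fin.castLE h a)) := by
    simp only [MM]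
    rw [Finset.sum_add_distrib, Finset.sum_const, Finset.card_univ, Fintype.card_fin,
      ← Finset.mul_sum, Finset.sum_sub_distrib, Finset.sum_const, Finset.card_univ,
      Fintype.card_fin, chi_sum h2 τ]
    push_cast
    ring
  rw [hsum, chi_castLE h τ a]
  cases hτ : τ a
  · rw [if_neg Bool.false_ne_true, if_neg Bool.false_ne_true]
    unfold mid; push_cast; ring
  · rw [if_pos rfl, if_pos rfl]
    unfold mid; push_cast; ring

lemma perbit {n k2 : ℕ} (h2 : 2 * k2 ≤ n) (h : k2 ≤ n) (hn : 0 < n) (τ : Fin k2 → Bool)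
    (x : Fin n → Fin n → ℝ) (a : Fin k2) :
    (1/144) * errI (tst h x a) (τ a) ≤
      ∑ j, (x (Fin.castLE h a) j - MM n k2 τ (Fin.castLE h a) j)^2 := by
  classical
  have hnR : (0:ℝ) < n := by exact_mod_cast hn
  set i : Fin n := Fin.castLE h a with hi
  set R : ℝ := ∑ j, x i j with hR
  set T : ℝ := ∑ j, MM n k2 τ i j with hT
  have hsq : ∀ j, (0:ℝ) ≤ (x i j - MM n k2 τ i j)^2 := fun j => sq_nonneg _
  by_cases herr : tst h x a = τ a
  · rw [errI, if_pos herr]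
    simp only [mul_zero]
    exact Finset.sum_nonneg (fun j _ => hsq j)
  · rw [errI, if_neg herr]
    rw [mul_one]
    -- Cauchy-Schwarz
    have hcs : (R - T)^2 ≤ (n : ℝ) * ∑ j, (x i j - MM n k2 τ i j)^2 := by
      have h1 : R - T = ∑ j, (x i j - MM n k2 τ i j) := by
        rw [hR, hT, ← Finset.sum_sub_distrib]
      rw [h1]
      have := sq_sum_le_card_mul_sum_sq
        (s := (Finset.univ : Finset (Fin n))) (f := fun j => x i j - MM n k2 τ i j)
      simpa [Finset.card_univ] using this
    -- the gap
    have hTval := rowsum_MM h2 h τ a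
    have hgap : (n:ℝ)/144 ≤ (R - T)^2 := by
      have hd2 := dl_sq hn
      have hd0 := dl_nonneg n
      have hnd : ((n:ℝ) * dl n / 2)^2 = (n:ℝ)/144 := by
        rw [div_pow, mul_pow, hd2]
        field_simp
        ring
      have hnd0 : (0:ℝ) ≤ (n:ℝ) * dl n / 2 := by positivity
      rcases Bool.eq_false_or_eq_true (τ a) with hτ | hτ
      · -- τ a = true, so the test said false: R < mid, T = mid + nd/2
        have htst : tst h x a = false := by
          cases htt : tst h x a
          · rfl
          · exact absurd (htt.trans hτ.symm) herr
        have hmidR : R < mid n k2 := by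
          rw [tst] at htst
          exact lt_of_not_ge (of_decide_eq_false htst)
        have hTeq : T = mid n k2 + n * dl n / 2 := by
          rw [hT, hi, hTval, hτ, if_pos rfl]
        have hge : (n:ℝ) * dl n / 2 ≤ T - R := by rw [hTeq]; linarith
        nlinarith [hge, hnd0]
      · -- τ a = false, so the test said true: mid ≤ R, T = mid - nd/2
        have htst : tst h x a = true := by
          cases htt : tst h x a
          · exact absurd (htt.trans hτ.symm) herr
          · rfl
        have hmidR : mid n k2 ≤ R := by
          rw [tst] at htst
          exact of_decide_eq_true htst
        have hTeq : T = mid n k2 - n * dl n / 2 := by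
          rw [hT, hi, hTval, hτ, if_neg Bool.false_ne_true]
        have hge : (n:ℝ) * dl n / 2 ≤ R - T := by rw [hTeq]; linarith
        nlinarith [hge, hnd0]
    -- combine
    by_contra hcon
    push_neg at hcon
    have hmul : (n:ℝ) * ∑ j, (x i j - MM n k2 τ i j)^2 < (n:ℝ) * (1/144) :=
      mul_lt_mul_of_pos_left hcon hnR
    linarith [le_trans hgap hcs]

lemma pointwise {n k2 : ℕ} (h2 : 2 * k2 ≤ n) (hn : 0 < n) (τ : Fin k2 → Bool)
    (x : Fin n → Fin n → ℝ) :
    ∀ h : k2 ≤ n, ∑ a : Fin k2, (1/144) * errI (tst h x a) (τ a) ≤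
      frobSq (x - MM n k2 τ) := by
  classical
  intro h
  have hrow : ∀ i : Fin n, (0:ℝ) ≤ ∑ j, (x i j - MM n k2 τ i j)^2 :=
    fun i => Finset.sum_nonneg (fun j _ => sq_nonneg _)
  calc ∑ a : Fin k2, (1/144) * errI (tst h x a) (τ a)
      ≤ ∑ a : Fin k2, ∑ j, (x (Fin.castLE h a) j - MM n k2 τ (Fin.castLE h a) j)^2 :=
        Finset.sum_le_sum (fun a _ => perbit h2 h hn τ x a)
    _ = ∑ i ∈ Finset.univ.map (Fin.castLEOrderEmb h).toEmbedding,
        ∑ j, (x i j - MM n k2 τ i j)^2 := by rw [Finset.sum_map]; rfl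
    _ ≤ ∑ i, ∑ j, (x i j - MM n k2 τ i j)^2 :=
        Finset.sum_le_sum_of_subset_of_nonneg (Finset.subset_univ _)
          (fun i _ _ => hrow i)
    _ = frobSq (x - MM n k2 τ) := by simp [frobSq]

end LB

open LB in
/-- minimax lower bound with two indifference sets: for sizes
`k₁ ≥ k₂ ≥ 1` with `k₁ + k₂ = n`, every measurable estimator has worst-case risk over
`C_SST(2, (k₁, k₂))` at least `c_l (n − k₁)`. -/
theorem two_set_lower_bound :
    ∃ cl : ℝ, 0 < cl ∧ ∃ N : ℕ, ∀ n : ℕ, N ≤ n →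
      ∀ k1 k2 : ℕ, 1 ≤ k2 → k2 ≤ k1 → k1 + k2 = n →
      ∀ Mhat : (Fin n → Fin n → ℝ) → Fin n → Fin n → ℝ, Measurable Mhat →
        ENNReal.ofReal (cl * ((n : ℝ) - k1)) ≤
          ⨆ (Mstar : Fin n → Fin n → ℝ) (_ : Mstar ∈ sstClassPart n 2 ![k1, k2]),
            risk Mhat Mstar := by
  classical
  refine ⟨25/46656, by norm_num, 1, ?_⟩
  intro n hN k1 k2 hk2 hk12 hsum Mhat hMhat
  have hn : 0 < n := by omega
  have h2 : 2 * k2 ≤ n := by omega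
  have h : k2 ≤ n := by omega
  -- the real-valued risks
  set Rr : (Fin k2 → Bool) → ℝ :=
    fun τ => ∑ ω : Fin n × Fin n → Bool,
      ww (MM n k2 τ) ω * frobSq (Mhat (obsMap n ω) - MM n k2 τ) with hRr
  set hfun : Fin k2 → (Fin k2 → Bool) → ℝ :=
    fun a τ => ∑ ω : Fin n × Fin n → Bool,
      ww (MM n k2 τ) ω * errI (tst h (Mhat (obsMap n ω)) a) (τ a) with hhfun
  have hq01 : ∀ (τ : Fin k2 → Bool) p, 0 ≤ qq (MM n k2 τ) p ∧ qq (MM n k2 τ) p ≤ 1 := by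
    intro τ p
    rcases qq_MM_bounds τ p with ⟨hl, hr⟩
    exact ⟨by linarith, by linarith⟩
  -- Step 1
  have hstep1 : ∀ τ : Fin k2 → Bool, (1/144) * ∑ a : Fin k2, hfun a τ ≤ Rr τ := by
    intro τ
    have hswap : ∑ ω : Fin n × Fin n → Bool, ww (MM n k2 τ) ω *
        (∑ a : Fin k2, (1/144) * errI (tst h (Mhat (obsMap n ω)) a) (τ a)) =
        (1/144) * ∑ a : Fin k2, hfun a τ := by
      calc ∑ ω : Fin n × Fin n → Bool, ww (MM n k2 τ) ω *
          (∑ a : Fin k2, (1/144) * errI (tst h (Mhat (obsMap n ω)) a) (τ a))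
          = ∑ ω : Fin n × Fin n → Bool, ∑ a : Fin k2, ww (MM n k2 τ) ω *
            ((1/144) * errI (tst h (Mhat (obsMap n ω)) a) (τ a)) :=
            Finset.sum_congr rfl (fun ω _ => Finset.mul_sum _ _ _)
        _ = ∑ a : Fin k2, ∑ ω : Fin n × Fin n → Bool, ww (MM n k2 τ) ω *
            ((1/144) * errI (tst h (Mhat (obsMap n ω)) a) (τ a)) := Finset.sum_comm
        _ = (1/144) * ∑ a : Fin k2, hfun a τ := by
            rw [Finset.mul_sum]
            refine Finset.sum_congr rfl (fun a _ => ?_)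
            rw [hhfun]
            rw [Finset.mul_sum]
            exact Finset.sum_congr rfl (fun ω _ => by ring)
    rw [← hswap, hRr]
    apply Finset.sum_le_sum
    intro ω _
    exact mul_le_mul_of_nonneg_left (pointwise h2 hn τ (Mhat (obsMap n ω)) h)
      (ww_nonneg' (hq01 τ) ω)
  -- Step 2
  have hstep2 : ∀ a : Fin k2, (Fintype.card (Fin k2 → Bool) : ℝ) * (25/324) ≤
      ∑ τ : Fin k2 → Bool, hfun a τ := by
    intro a
    have hflip : ∑ τ : Fin k2 → Bool, hfun a (flp a τ) = ∑ τ : Fin k2 → Bool, hfun a τ :=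
      Function.Bijective.sum_comp (flp_bijective a) _
    have hpair : ∀ τ : Fin k2 → Bool, (25/162 : ℝ) ≤ hfun a τ + hfun a (flp a τ) := by
      intro τ
      have hminsum := min_sum_ge (M := MM n k2 τ) (M' := MM n k2 (flp a τ)) hn
        (qq_MM_bounds τ) (qq_MM_bounds (flp a τ)) (qq_flp_diff_sq hn a τ) (bad_card h2 a τ)
      have hptwise : ∀ ω : Fin n × Fin n → Bool,
          min (ww (MM n k2 τ) ω) (ww (MM n k2 (flp a τ)) ω) ≤
          ww (MM n k2 τ) ω * errI (tst h (Mhat (obsMap n ω)) a) (τ a) +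
          ww (MM n k2 (flp a τ)) ω * errI (tst h (Mhat (obsMap n ω)) a) ((flp a τ) a) := by
        intro ω
        rw [flp_apply_same]
        set e := errI (tst h (Mhat (obsMap n ω)) a) (τ a) with he
        set e' := errI (tst h (Mhat (obsMap n ω)) a) (!τ a) with he'
        have h1 : e + e' = 1 := errI_add _ _
        have h2e : 0 ≤ e := errI_nonneg _ _
        have h3e : 0 ≤ e' := errI_nonneg _ _
        have hm1 : min (ww (MM n k2 τ) ω) (ww (MM n k2 (flp a τ)) ω) ≤ ww (MM n k2 τ) ω :=
          min_le_left _ _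
        have hm2 : min (ww (MM n k2 τ) ω) (ww (MM n k2 (flp a τ)) ω) ≤
            ww (MM n k2 (flp a τ)) ω := min_le_right _ _
        set m := min (ww (MM n k2 τ) ω) (ww (MM n k2 (flp a τ)) ω) with hm
        have p1 := mul_le_mul_of_nonneg_right hm1 h2e
        have p2 := mul_le_mul_of_nonneg_right hm2 h3e
        have hm3 : m * e + m * e' = m := by
          calc m * e + m * e' = m * (e + e') := by ring
            _ = m := by rw [h1, mul_one]
        linarith [p1, p2, hm3]
      calc (25/162 : ℝ) ≤ ∑ ω : Fin n × Fin n → Bool,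
            min (ww (MM n k2 τ) ω) (ww (MM n k2 (flp a τ)) ω) := hminsum
        _ ≤ ∑ ω : Fin n × Fin n → Bool,
            (ww (MM n k2 τ) ω * errI (tst h (Mhat (obsMap n ω)) a) (τ a) +
             ww (MM n k2 (flp a τ)) ω * errI (tst h (Mhat (obsMap n ω)) a) ((flp a τ) a)) :=
            Finset.sum_le_sum (fun ω _ => hptwise ω)
        _ = hfun a τ + hfun a (flp a τ) := by
            rw [Finset.sum_add_distrib]
    have hsum2 : (Fintype.card (Fin k2 → Bool) : ℝ) * (25/162) ≤
        ∑ τ : Fin k2 → Bool, (hfun a τ + hfun a (flp a τ)) := by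
      calc (Fintype.card (Fin k2 → Bool) : ℝ) * (25/162)
          = ∑ _τ : Fin k2 → Bool, (25/162 : ℝ) := by
            rw [Finset.sum_const, Finset.card_univ, nsmul_eq_mul]
        _ ≤ _ := Finset.sum_le_sum (fun τ _ => hpair τ)
    rw [Finset.sum_add_distrib, hflip] at hsum2
    linarith
  -- Step 3
  have hstep3 : (Fintype.card (Fin k2 → Bool) : ℝ) * ((25/46656) * k2) ≤
      ∑ τ : Fin k2 → Bool, Rr τ := by
    have hA : ∑ τ : Fin k2 → Bool, (1/144 : ℝ) * ∑ a : Fin k2, hfun a τ ≤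
        ∑ τ : Fin k2 → Bool, Rr τ := Finset.sum_le_sum (fun τ _ => hstep1 τ)
    have hB : ∑ τ : Fin k2 → Bool, (1/144 : ℝ) * ∑ a : Fin k2, hfun a τ =
        (1/144) * ∑ a : Fin k2, ∑ τ : Fin k2 → Bool, hfun a τ := by
      rw [← Finset.mul_sum, Finset.sum_comm]
    have hC : (Fintype.card (Fin k2 → Bool) : ℝ) * (25/324) * k2 ≤
        ∑ a : Fin k2, ∑ τ : Fin k2 → Bool, hfun a τ := by
      calc (Fintype.card (Fin k2 → Bool) : ℝ) * (25/324) * k2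
          = ∑ _a : Fin k2, (Fintype.card (Fin k2 → Bool) : ℝ) * (25/324) := by
            rw [Finset.sum_const, Finset.card_univ, Fintype.card_fin, nsmul_eq_mul]
            ring
        _ ≤ _ := Finset.sum_le_sum (fun a _ => hstep2 a)
    calc (Fintype.card (Fin k2 → Bool) : ℝ) * ((25/46656) * k2)
        = (1/144) * ((Fintype.card (Fin k2 → Bool) : ℝ) * (25/324) * k2) := by ring
      _ ≤ (1/144) * ∑ a : Fin k2, ∑ τ : Fin k2 → Bool, hfun a τ := by
          apply mul_le_mul_of_nonneg_left hC
          norm_num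
      _ = ∑ τ : Fin k2 → Bool, (1/144 : ℝ) * ∑ a : Fin k2, hfun a τ := hB.symm
      _ ≤ _ := hA
  -- Step 4: pick a good hypothesis
  have hstep4 : ∃ τ0 : Fin k2 → Bool, (25/46656 : ℝ) * k2 ≤ Rr τ0 := by
    by_contra hcon
    push_neg at hcon
    have hlt : ∑ τ : Fin k2 → Bool, Rr τ <
        ∑ _τ : Fin k2 → Bool, (25/46656 : ℝ) * k2 :=
      Finset.sum_lt_sum_of_nonempty Finset.univ_nonempty (fun τ _ => hcon τ)
    rw [Finset.sum_const, Finset.card_univ, nsmul_eq_mul] at hlt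
    linarith
  obtain ⟨τ0, hτ0⟩ := hstep4
  have hmem := MM_mem_sstClassPart hk2 hk12 hsum τ0
  have hMb : ∀ i j, 0 ≤ MM n k2 τ0 i j ∧ MM n k2 τ0 i j ≤ 1 := hmem.1.1
  have hrisk : risk Mhat (MM n k2 τ0) = ENNReal.ofReal (Rr τ0) := risk_eq hMb hMhat
  have hcast : (n : ℝ) - k1 = (k2 : ℝ) := by
    have : (k1 : ℝ) + k2 = n := by exact_mod_cast hsum
    linarith
  calc ENNReal.ofReal ((25/46656 : ℝ) * ((n : ℝ) - k1))
      = ENNReal.ofReal ((25/46656 : ℝ) * k2) := by rw [hcast]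
    _ ≤ ENNReal.ofReal (Rr τ0) := ENNReal.ofReal_le_ofReal hτ0
    _ = risk Mhat (MM n k2 τ0) := hrisk.symm
    _ ≤ ⨆ (Mstar : Fin n → Fin n → ℝ) (_ : Mstar ∈ sstClassPart n 2 ![k1, k2]),
        risk Mhat Mstar := le_iSup₂ (f := fun (Mstar : Fin n → Fin n → ℝ)
          (_ : Mstar ∈ sstClassPart n 2 ![k1, k2]) => risk Mhat Mstar) (MM n k2 τ0) hmem


end SSTPaper
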